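/- Let d, e be threshold partitions of length n with d(i) = n−1 and d, e arising from threshold graphs. Then the componentwise maximum d ∨ e and componentwise minimum d ∧ e of two threshold partitions of length n are again threshold partitions of length n. -/

import Mathlib

open scoped Classical in
/-- The degree of vertex `v` in the simple graph `G` on `[n]`. -/
noncomputable def degC {n : ℕ} (G : SimpleGraph (Fin n)) (v : Fin n) : ℕ :=
  (Finset.univ.filter (fun w => G.Adj v w)).card

/-- A graph is threshold if every (nonempty) induced subgraph has a
dominating or an isolated vertex. -/
def IsThreshold {n : ℕ} (G : SimpleGraph (Fin n)) : Prop :=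
  ∀ S : Finset (Fin n), S.Nonempty →
    ∃ v ∈ S, (∀ w ∈ S, w ≠ v → G.Adj v w) ∨ (∀ w ∈ S, ¬ G.Adj v w)

/-- `d` is a threshold partition of length `n`: the weakly decreasing
rearrangement of the degree sequence of a threshold graph on `n` vertices. -/
def IsThresholdPartition (n : ℕ) (d : Fin n → ℕ) : Prop :=
  Antitone d ∧ ∃ G : SimpleGraph (Fin n), IsThreshold G ∧
    ∃ σ : Equiv.Perm (Fin n), ∀ i, d i = degC G (σ i)

open scoped Classical

/-- The numerical characterization of threshold partitions. -/
def IsTP (n : ℕ) (d : Fin n → ℕ) : Prop :=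
  Antitone d ∧ (∀ i, d i < n) ∧
    ∀ i j : Fin n, i < j → ((j : ℕ) ≤ d i ↔ (i : ℕ) < d j)

lemma degC_def {n : ℕ} (G : SimpleGraph (Fin n)) (v : Fin n) :
    degC G v = (Finset.univ.filter (fun w => G.Adj v w)).card := rfl

lemma card_filter_val_lt (n m : ℕ) :
    (Finset.univ.filter (fun w : Fin n => (w : ℕ) < m)).card = min m n := by
  have h1 : ((Finset.univ : Finset (Fin n)).filter
      (fun w : Fin n => (w : ℕ) < m)).map Fin.valEmbedding
      = (Finset.Iio n).filter (fun k => k < m) := by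
    rw [← Fin.map_valEmbedding_univ, Finset.filter_map]
    rfl
  have h2 : (Finset.Iio n).filter (fun k => k < m) = Finset.Iio (min m n) := by
    ext k
    simp only [Finset.mem_filter, Finset.mem_Iio, Nat.lt_min]
    tauto
  have h3 := congrArg Finset.card h1
  rw [Finset.card_map] at h3
  rw [h3, h2, Nat.card_Iio]

/-- In a threshold graph, one of the two neighborhood inclusions holds. -/
lemma nested_aux {n : ℕ} {G : SimpleGraph (Fin n)} (hG : IsThreshold G) (u v : Fin n) :
    (∀ w, w ≠ u → G.Adj v w → G.Adj u w) ∨ (∀ w, w ≠ v → G.Adj u w → G.Adj v w) := by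
  by_contra hc
  push_neg at hc
  obtain ⟨⟨a, hau, hva, hua⟩, ⟨b, hbv, hub, hvb⟩⟩ := hc
  have hu : u ∈ ({u, v, a, b} : Finset (Fin n)) := by simp
  have hv : v ∈ ({u, v, a, b} : Finset (Fin n)) := by simp
  have ha : a ∈ ({u, v, a, b} : Finset (Fin n)) := by simp
  have hb : b ∈ ({u, v, a, b} : Finset (Fin n)) := by simp
  obtain ⟨x, hxS, hx⟩ := hG {u, v, a, b} ⟨u, hu⟩
  simp only [Finset.mem_insert, Finset.mem_singleton] at hxS
  rcases hxS with rfl | rfl | rfl | rfl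
  · rcases hx with hdom | hiso
    · exact hua (hdom a ha hau)
    · exact hiso b hb hub
  · rcases hx with hdom | hiso
    · exact hvb (hdom b hb hbv)
    · exact hiso a ha hva
  · rcases hx with hdom | hiso
    · exact hua ((hdom u hu (Ne.symm hau)).symm)
    · exact hiso v hv hva.symm
  · rcases hx with hdom | hiso
    · exact hvb ((hdom v hv (Ne.symm hbv)).symm)
    · exact hiso u hu hub.symm

/-- Neighborhood nesting aligned with degrees. -/
lemma nested {n : ℕ} {G : SimpleGraph (Fin n)} (hG : IsThreshold G) {u v : Fin n}
    (hdeg : degC G v ≤ degC G u) : ∀ w, w ≠ u → G.Adj v w → G.Adj u w := by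
  rcases nested_aux hG u v with h | h
  · exact h
  · intro w hwu hvw
    by_cases huv : u = v
    · exact huv ▸ hvw
    have hcards : (Finset.univ.filter (fun x => G.Adj v x)).card ≤
        (Finset.univ.filter (fun x => G.Adj u x)).card := by
      rw [← degC_def, ← degC_def]; exact hdeg
    have hsub : (Finset.univ.filter (fun x => G.Adj u x)).erase v ⊆
        (Finset.univ.filter (fun x => G.Adj v x)).erase u := by
      intro x hx
      rw [Finset.mem_erase, Finset.mem_filter] at hx
      rw [Finset.mem_erase, Finset.mem_filter]
      exact ⟨(G.ne_of_adj hx.2.2).symm, Finset.mem_univ x, h x hx.1 hx.2.2⟩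
    have hcard2 : ((Finset.univ.filter (fun x => G.Adj v x)).erase u).card ≤
        ((Finset.univ.filter (fun x => G.Adj u x)).erase v).card := by
      by_cases hadj : G.Adj u v
      · have hm1 : v ∈ Finset.univ.filter (fun x => G.Adj u x) := by
          rw [Finset.mem_filter]; exact ⟨Finset.mem_univ v, hadj⟩
        have hm2 : u ∈ Finset.univ.filter (fun x => G.Adj v x) := by
          rw [Finset.mem_filter]; exact ⟨Finset.mem_univ u, hadj.symm⟩
        rw [Finset.card_erase_of_mem hm1, Finset.card_erase_of_mem hm2]
        exact Nat.sub_le_sub_right hcards 1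
      · have hm1 : v ∉ Finset.univ.filter (fun x => G.Adj u x) := by
          rw [Finset.mem_filter]; tauto
        have hm2 : u ∉ Finset.univ.filter (fun x => G.Adj v x) := by
          rw [Finset.mem_filter]
          exact fun hh => hadj hh.2.symm
        rw [Finset.erase_eq_of_notMem hm1, Finset.erase_eq_of_notMem hm2]
        exact hcards
    have hkey := Finset.eq_of_subset_of_card_le hsub hcard2
    have hwmem : w ∈ (Finset.univ.filter (fun x => G.Adj v x)).erase u := by
      rw [Finset.mem_erase, Finset.mem_filter]
      exact ⟨hwu, Finset.mem_univ w, hvw⟩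
    rw [← hkey, Finset.mem_erase, Finset.mem_filter] at hwmem
    exact hwmem.2.2

section Forward

variable {n : ℕ} {G : SimpleGraph (Fin n)} {σ : Equiv.Perm (Fin n)} {d : Fin n → ℕ}

lemma deg_lt (G : SimpleGraph (Fin n)) (v : Fin n) : degC G v < n := by
  have h : (Finset.univ.filter (fun w => G.Adj v w)) ⊂ Finset.univ := by
    rw [Finset.ssubset_univ_iff]
    intro h
    have hv : v ∈ Finset.univ.filter (fun w => G.Adj v w) := by
      rw [h]; exact Finset.mem_univ v
    rw [Finset.mem_filter] at hv
    exact G.irrefl hv.2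
  have := Finset.card_lt_card h
  rw [degC_def]
  simpa [Finset.card_univ] using this

lemma adj_of_lt_deg (hG : IsThreshold G) (hanti : Antitone d)
    (hdeg : ∀ i, d i = degC G (σ i)) {i j : Fin n} (hij : i ≠ j)
    (h : (i : ℕ) < d j) : G.Adj (σ i) (σ j) := by
  by_contra hadj
  have hex : ∃ k : Fin n, i < k ∧ G.Adj (σ j) (σ k) := by
    by_contra hc
    push_neg at hc
    have hsub : ∀ w ∈ Finset.univ.filter (fun w => G.Adj (σ j) w),
        σ.symm w ∈ Finset.Iio i := by
      intro w hw
      rw [Finset.mem_filter] at hw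
      rw [Finset.mem_Iio]
      rcases lt_trichotomy (σ.symm w) i with h1 | h1 | h1
      · exact h1
      · exfalso
        apply hadj
        have hwi : w = σ i := by rw [← h1]; simp
        exact (hwi ▸ hw.2).symm
      · exact absurd hw.2 (by have := hc (σ.symm w) h1; simpa using this)
    have hcard : (Finset.univ.filter (fun w => G.Adj (σ j) w)).card ≤ (Finset.Iio i).card :=
      Finset.card_le_card_of_injOn (fun w => σ.symm w) hsub
        (fun a _ b _ hab => σ.symm.injective hab)
    rw [Fin.card_Iio] at hcard
    have hdj : d j = (Finset.univ.filter (fun w => G.Adj (σ j) w)).card := hdeg j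
    omega
  obtain ⟨k, hik, hadjk⟩ := hex
  have hdk : degC G (σ k) ≤ degC G (σ i) := by
    rw [← hdeg k, ← hdeg i]
    exact hanti hik.le
  have hne : σ j ≠ σ i := fun hh => hij (σ.injective hh).symm
  exact hadj (nested hG hdk (σ j) hne hadjk.symm)

lemma adj_of_le_deg (hG : IsThreshold G) (hanti : Antitone d)
    (hdeg : ∀ i, d i = degC G (σ i)) {i j : Fin n} (hij : i < j)
    (h : (j : ℕ) ≤ d i) : G.Adj (σ i) (σ j) := by
  by_contra hadj
  have hex : ∃ k : Fin n, j < k ∧ G.Adj (σ i) (σ k) := by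
    by_contra hc
    push_neg at hc
    have hsub : ∀ w ∈ Finset.univ.filter (fun w => G.Adj (σ i) w),
        σ.symm w ∈ (Finset.Iio j).erase i := by
      intro w hw
      rw [Finset.mem_filter] at hw
      rw [Finset.mem_erase, Finset.mem_Iio]
      constructor
      · intro hh
        apply G.irrefl
        have hwi : w = σ i := by rw [← hh]; simp
        exact hwi ▸ hw.2
      · rcases lt_trichotomy (σ.symm w) j with h1 | h1 | h1
        · exact h1
        · exfalso
          apply hadj
          have hwj : w = σ j := by rw [← h1]; simp
          exact hwj ▸ hw.2
        · exact absurd hw.2 (by have := hc (σ.symm w) h1; simpa using this)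
    have hcard : (Finset.univ.filter (fun w => G.Adj (σ i) w)).card ≤
        ((Finset.Iio j).erase i).card :=
      Finset.card_le_card_of_injOn (fun w => σ.symm w) hsub
        (fun a _ b _ hab => σ.symm.injective hab)
    rw [Finset.card_erase_of_mem (by rw [Finset.mem_Iio]; exact hij), Fin.card_Iio] at hcard
    have hdi : d i = (Finset.univ.filter (fun w => G.Adj (σ i) w)).card := hdeg i
    have hj0 : (0 : ℕ) < (j : ℕ) := lt_of_le_of_lt (Nat.zero_le _) hij
    omega
  obtain ⟨k, hjk, hadjk⟩ := hex
  have hdk : degC G (σ k) ≤ degC G (σ j) := by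
    rw [← hdeg k, ← hdeg j]
    exact hanti hjk.le
  have hne : σ i ≠ σ j := fun hh => (ne_of_lt hij) (σ.injective hh)
  exact hadj ((nested hG hdk (σ i) hne hadjk.symm).symm)

lemma deg_ge_of_adj (hG : IsThreshold G) (hanti : Antitone d)
    (hdeg : ∀ i, d i = degC G (σ i)) {i j : Fin n} (hij : i < j)
    (hadj : G.Adj (σ i) (σ j)) : (i : ℕ) < d j ∧ (j : ℕ) ≤ d i := by
  constructor
  · have hsub : ∀ k ∈ Finset.Iic i, σ k ∈ Finset.univ.filter (fun w => G.Adj (σ j) w) := by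
      intro k hk
      rw [Finset.mem_Iic] at hk
      rw [Finset.mem_filter]
      refine ⟨Finset.mem_univ _, ?_⟩
      rcases eq_or_lt_of_le hk with rfl | hk'
      · exact hadj.symm
      · have hdk : degC G (σ i) ≤ degC G (σ k) := by
          rw [← hdeg k, ← hdeg i]; exact hanti hk'.le
        have hne : σ j ≠ σ k := fun hh => (ne_of_lt (lt_trans hk' hij)) (σ.injective hh).symm
        exact (nested hG hdk (σ j) hne hadj).symm
    have hcard : (Finset.Iic i).card ≤ (Finset.univ.filter (fun w => G.Adj (σ j) w)).card :=
      Finset.card_le_card_of_injOn σ hsub (fun a _ b _ hab => σ.injective hab)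
    rw [Fin.card_Iic] at hcard
    have hdj : d j = (Finset.univ.filter (fun w => G.Adj (σ j) w)).card := hdeg j
    omega
  · have hsub : ∀ k ∈ (Finset.Iic j).erase i,
        σ k ∈ Finset.univ.filter (fun w => G.Adj (σ i) w) := by
      intro k hk
      rw [Finset.mem_erase, Finset.mem_Iic] at hk
      rw [Finset.mem_filter]
      refine ⟨Finset.mem_univ _, ?_⟩
      rcases eq_or_lt_of_le hk.2 with rfl | hk'
      · exact hadj
      · have hdk : degC G (σ j) ≤ degC G (σ k) := by
          rw [← hdeg k, ← hdeg j]; exact hanti hk'.le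
        have hne : σ i ≠ σ k := fun hh => hk.1 (σ.injective hh.symm)
        exact (nested hG hdk (σ i) hne hadj.symm).symm
    have hcard : ((Finset.Iic j).erase i).card ≤
        (Finset.univ.filter (fun w => G.Adj (σ i) w)).card :=
      Finset.card_le_card_of_injOn σ hsub (fun a _ b _ hab => σ.injective hab)
    rw [Finset.card_erase_of_mem (by rw [Finset.mem_Iic]; exact hij.le), Fin.card_Iic] at hcard
    have hdi : d i = (Finset.univ.filter (fun w => G.Adj (σ i) w)).card := hdeg i
    omega

lemma isTP_of_isThresholdPartition {n : ℕ} {d : Fin n → ℕ}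
    (h : IsThresholdPartition n d) : IsTP n d := by
  obtain ⟨hanti, G, hG, σ, hdeg⟩ := h
  refine ⟨hanti, fun i => (hdeg i) ▸ deg_lt G (σ i), fun i j hij => ?_⟩
  constructor
  · intro hle
    exact (deg_ge_of_adj hG hanti hdeg hij (adj_of_le_deg hG hanti hdeg hij hle)).1
  · intro hlt
    exact (deg_ge_of_adj hG hanti hdeg hij
      (adj_of_lt_deg hG hanti hdeg hij.ne hlt)).2

end Forward

section Backward

variable {n : ℕ} {d : Fin n → ℕ}

/-- The canonical shifted graph associated with `d`. -/
def shiftGraph (n : ℕ) (d : Fin n → ℕ) : SimpleGraph (Fin n) where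
  Adj i j := (i < j ∧ (j : ℕ) ≤ d i) ∨ (j < i ∧ (i : ℕ) ≤ d j)
  symm := by constructor; intro i j h; tauto
  loopless := by constructor; intro i h; rcases h with ⟨h, _⟩ | ⟨h, _⟩ <;> exact lt_irrefl _ h

lemma shiftGraph_isThreshold (hanti : Antitone d) : IsThreshold (shiftGraph n d) := by
  intro S hS
  by_cases hadj : (shiftGraph n d).Adj (S.min' hS) (S.max' hS)
  · refine ⟨S.min' hS, S.min'_mem hS, Or.inl ?_⟩
    intro w hw hwu
    have huw : S.min' hS < w := lt_of_le_of_ne (S.min'_le w hw) (Ne.symm hwu)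
    have hwv : (w : ℕ) ≤ ((S.max' hS : Fin n) : ℕ) := S.le_max' w hw
    have hvu : ((S.max' hS : Fin n) : ℕ) ≤ d (S.min' hS) := by
      rcases hadj with ⟨_, h⟩ | ⟨h1, _⟩
      · exact h
      · exact absurd (lt_of_le_of_lt (S.min'_le _ (S.max'_mem hS)) h1) (lt_irrefl _)
    exact Or.inl ⟨huw, le_trans hwv hvu⟩
  · refine ⟨S.max' hS, S.max'_mem hS, Or.inr ?_⟩
    intro w hw hadjw
    apply hadj
    have hwv : w ≤ S.max' hS := S.le_max' w hw
    rcases hadjw with ⟨h1, h2⟩ | ⟨h1, h2⟩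
    · exact absurd (lt_of_le_of_lt hwv h1) (lt_irrefl _)
    · have huw : S.min' hS ≤ w := S.min'_le w hw
      have huv : S.min' hS < S.max' hS := lt_of_le_of_lt huw h1
      exact Or.inl ⟨huv, le_trans h2 (hanti huw)⟩

lemma shiftGraph_degC (h : IsTP n d) (i : Fin n) : degC (shiftGraph n d) i = d i := by
  obtain ⟨hanti, hbd, hiff⟩ := h
  have hrw : (Finset.univ.filter (fun w => (shiftGraph n d).Adj i w)) =
      Finset.univ.filter (fun w : Fin n =>
        (i < w ∧ (w : ℕ) ≤ d i) ∨ (w < i ∧ (w : ℕ) < d i)) := by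
    apply Finset.filter_congr
    intro w _
    show ((i < w ∧ (w : ℕ) ≤ d i) ∨ (w < i ∧ (i : ℕ) ≤ d w)) ↔ _
    constructor
    · rintro (⟨h1, h2⟩ | ⟨h1, h2⟩)
      · exact Or.inl ⟨h1, h2⟩
      · exact Or.inr ⟨h1, (hiff w i h1).mp h2⟩
    · rintro (⟨h1, h2⟩ | ⟨h1, h2⟩)
      · exact Or.inl ⟨h1, h2⟩
      · exact Or.inr ⟨h1, (hiff w i h1).mpr h2⟩
  rw [degC_def, hrw]
  by_cases hcase : d i ≤ (i : ℕ)
  · have heq : Finset.univ.filter (fun w : Fin n =>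
        (i < w ∧ (w : ℕ) ≤ d i) ∨ (w < i ∧ (w : ℕ) < d i)) =
        Finset.univ.filter (fun w : Fin n => (w : ℕ) < d i) := by
      apply Finset.filter_congr
      intro w _
      rw [Fin.lt_def, Fin.lt_def]
      constructor
      · rintro (⟨h1, h2⟩ | ⟨h1, h2⟩) <;> omega
      · intro hw
        exact Or.inr ⟨by omega, hw⟩
    rw [heq, card_filter_val_lt]
    exact min_eq_left (le_of_lt (hbd i))
  · push_neg at hcase
    have heq : Finset.univ.filter (fun w : Fin n =>
        (i < w ∧ (w : ℕ) ≤ d i) ∨ (w < i ∧ (w : ℕ) < d i)) =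
        (Finset.univ.filter (fun w : Fin n => (w : ℕ) < d i + 1)).erase i := by
      ext w
      rw [Finset.mem_erase, Finset.mem_filter, Finset.mem_filter]
      rw [Fin.lt_def, Fin.lt_def]
      constructor
      · rintro ⟨_, (⟨h1, h2⟩ | ⟨h1, h2⟩)⟩
        · exact ⟨fun hh => by rw [hh] at h1; omega, Finset.mem_univ w, by omega⟩
        · exact ⟨fun hh => by rw [hh] at h1; omega, Finset.mem_univ w, by omega⟩
      · rintro ⟨hne, _, hw⟩
        refine ⟨Finset.mem_univ w, ?_⟩
        have hne' : (w : ℕ) ≠ (i : ℕ) := fun hh => hne (Fin.ext hh)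
        rcases Nat.lt_or_ge (w : ℕ) (i : ℕ) with h1 | h1
        · exact Or.inr ⟨h1, by omega⟩
        · exact Or.inl ⟨by omega, by omega⟩
    rw [heq, Finset.card_erase_of_mem, card_filter_val_lt]
    · rw [min_eq_left (hbd i)]
      omega
    · rw [Finset.mem_filter]
      exact ⟨Finset.mem_univ i, by omega⟩

lemma isThresholdPartition_of_isTP (h : IsTP n d) : IsThresholdPartition n d := by
  refine ⟨h.1, shiftGraph n d, shiftGraph_isThreshold h.1, Equiv.refl _, fun i => ?_⟩
  simp [shiftGraph_degC h i]

end Backward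

/-- the componentwise maximum and minimum of two threshold
partitions of length `n` are again threshold partitions of length `n`. -/
theorem threshold_partitions_lattice (n : ℕ) (d e : Fin n → ℕ)
    (hd : IsThresholdPartition n d) (he : IsThresholdPartition n e) :
    IsThresholdPartition n (fun i => max (d i) (e i)) ∧
    IsThresholdPartition n (fun i => min (d i) (e i)) := by
  obtain ⟨hda, hdb, hdc⟩ := isTP_of_isThresholdPartition hd
  obtain ⟨hea, heb, hec⟩ := isTP_of_isThresholdPartition he
  constructor
  · apply isThresholdPartition_of_isTP
    refine ⟨fun a b hab => max_le_max (hda hab) (hea hab),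
      fun i => max_lt (hdb i) (heb i), fun i j hij => ?_⟩
    simp only [le_max_iff, lt_max_iff, hdc i j hij, hec i j hij]
  · apply isThresholdPartition_of_isTP
    refine ⟨fun a b hab => min_le_min (hda hab) (hea hab),
      fun i => lt_of_le_of_lt (min_le_left _ _) (hdb i), fun i j hij => ?_⟩
    simp only [le_min_iff, lt_min_iff, hdc i j hij, hec i j hij]
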